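/- Let (G,c) be a W-state graph on n vertices and G_m its spanning subgraph of monochromatic edges. Then G_m is the disjoint union of exactly two factor-critical connected components. -/

import Mathlib

/-! Multigraphs (parallel edges allowed, no loops) with half-edge 2-colourings,
    matchings, W-state graphs and W-cones, following the paper. -/

structure Multigraph (V E : Type) where
  fst : E → V
  snd : E → V
  no_loop : ∀ e, fst e ≠ snd e

namespace Multigraph

variable {V E : Type} (G : Multigraph V E)

/-- Edge `e` is incident with vertex `v`. -/
def Inc (e : E) (v : V) : Prop := G.fst e = v ∨ G.snd e = v

/-- Adjacency using only edges in the edge set `F`. -/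
def AdjIn (F : Set E) (u v : V) : Prop :=
  u ≠ v ∧ ∃ e ∈ F, G.Inc e u ∧ G.Inc e v

def Adj (u v : V) : Prop := G.AdjIn Set.univ u v

/-- Reachability inside the vertex set `S`, using only edges in `F`. -/
def ReachOn (F : Set E) (S : Set V) (u v : V) : Prop :=
  Relation.ReflTransGen (fun a b => a ∈ S ∧ b ∈ S ∧ G.AdjIn F a b) u v

/-- The subgraph with edge set `F` induced on the vertex set `S` is connected. -/
def ConnectedOn (F : Set E) (S : Set V) : Prop :=
  ∀ u ∈ S, ∀ v ∈ S, G.ReachOn F S u v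

def Connected : Prop := G.ConnectedOn Set.univ Set.univ

/-- `K` is a connected component of the subgraph with edge set `F` induced on `S`. -/
def IsCompOn (F : Set E) (S : Set V) (K : Set V) : Prop :=
  ∃ v ∈ S, K = {u | u ∈ S ∧ G.ReachOn F S u v}

def IsMatching (M : Set E) : Prop :=
  ∀ e ∈ M, ∀ f ∈ M, e ≠ f → ∀ v : V, ¬ (G.Inc e v ∧ G.Inc f v)

/-- `M` is a perfect matching of the subgraph of `G` induced on `S`. -/
def IsPerfectMatchingOn (S : Set V) (M : Set E) : Prop :=
  (∀ e ∈ M, G.fst e ∈ S ∧ G.snd e ∈ S) ∧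
  ∀ v ∈ S, ∃! e, e ∈ M ∧ G.Inc e v

def IsPerfectMatching (M : Set E) : Prop :=
  G.IsPerfectMatchingOn Set.univ M

/-- Every edge lies in some perfect matching. -/
def MatchingCovered : Prop :=
  ∀ e : E, ∃ M : Set E, G.IsPerfectMatching M ∧ e ∈ M

/-- The subgraph with edge set `F` induced on `K` is factor-critical. -/
def FactorCriticalOn (F : Set E) (K : Set V) : Prop :=
  ∀ v ∈ K, ∃ M : Set E, M ⊆ F ∧ G.IsPerfectMatchingOn (K \ {v}) M

def FactorCritical : Prop := G.FactorCriticalOn Set.univ Set.univ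

/-- `M` is a maximum matching among matchings using only edges in `F`. -/
def IsMaxMatchingIn (F M : Set E) : Prop :=
  M ⊆ F ∧ G.IsMatching M ∧
  ∀ N : Set E, N ⊆ F → G.IsMatching N → N.ncard ≤ M.ncard

/-- Half-edge 2-colourings are functions `c : E → V → Bool`
    (`true` = red, `false` = blue; only the values at endpoints matter). -/
def Bichromatic (c : E → V → Bool) (e : E) : Prop :=
  c e (G.fst e) ≠ c e (G.snd e)

/-- The monochromatic edges. -/
def MonoEdges (c : E → V → Bool) : Set E := {e | ¬ G.Bichromatic c e}

/-- Every vertex has an incident red half-edge. -/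
def VertexCond (c : E → V → Bool) : Prop :=
  ∀ v : V, ∃ e : E, G.Inc e v ∧ c e v = true

/-- Every perfect matching contains exactly one bichromatic edge. -/
def MatchingCond (c : E → V → Bool) : Prop :=
  ∀ M : Set E, G.IsPerfectMatching M → ∃! e, e ∈ M ∧ G.Bichromatic c e

/-- All monochromatic edges are blue. -/
def NoRedMono (c : E → V → Bool) : Prop :=
  ∀ e : E, ¬ G.Bichromatic c e → c e (G.fst e) = false

/-- W-state graph. -/
def IsWState (c : E → V → Bool) : Prop :=
  G.MatchingCovered ∧ G.MatchingCond c ∧ G.VertexCond c ∧ G.NoRedMono c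

def Universal (v : V) : Prop := ∀ u : V, u ≠ v → G.Adj u v

/-- W-cone with apex `v`. -/
def IsWConeWithApex (c : E → V → Bool) (v : V) : Prop :=
  G.MatchingCovered ∧ G.Universal v ∧
  (∀ e : E, G.Bichromatic c e ↔ G.Inc e v) ∧
  G.VertexCond c ∧ G.NoRedMono c

def IsWCone (c : E → V → Bool) : Prop := ∃ v : V, G.IsWConeWithApex c v

/-- `e` and `f` are parallel edges (same pair of endpoints). -/
def Parallel (e f : E) : Prop :=
  (G.fst e = G.fst f ∧ G.snd e = G.snd f) ∨
  (G.fst e = G.snd f ∧ G.snd e = G.fst f)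

/-- The cut `δ(X)`. -/
def CutEdges (X : Set V) : Set E :=
  {e | (G.fst e ∈ X ∧ G.snd e ∉ X) ∨ (G.fst e ∉ X ∧ G.snd e ∈ X)}

/-- `δ(X)` is a tight cut. -/
def IsTightCut (X : Set V) : Prop :=
  ∀ M : Set E, G.IsPerfectMatching M → ∃! e, e ∈ M ∧ e ∈ G.CutEdges X

def Bipartite : Prop :=
  ∃ f : V → Bool, ∀ e : E, f (G.fst e) ≠ f (G.snd e)

/-- A brick: non-bipartite matching-covered graph with no non-trivial tight cut. -/
def IsBrick : Prop :=
  G.MatchingCovered ∧ ¬ G.Bipartite ∧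
  ∀ X : Set V, 2 ≤ X.ncard → 2 ≤ (Set.univ \ X).ncard → ¬ G.IsTightCut X

end Multigraph

namespace WProof

open Multigraph

variable {V E : Type} {G : Multigraph V E}

/-- `N` covers exactly the vertices of `K`. -/
def CoversExactly (G : Multigraph V E) (N : Set E) (K : Set V) : Prop :=
  ∀ v, (∃ e ∈ N, G.Inc e v) ↔ v ∈ K

lemma inc_pair {e : E} {x y t : V} (hx : G.Inc e x) (hy : G.Inc e y) (hxy : x ≠ y)
    (ht : G.Inc e t) : t = x ∨ t = y := by
  rcases hx with h1 | h1 <;> rcases hy with h2 | h2 <;> rcases ht with h3 | h3 <;>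
    subst_vars <;> tauto

lemma exists_other {e : E} {u : V} (h : G.Inc e u) :
    ∃ v, G.Inc e v ∧ v ≠ u ∧ ∀ t, G.Inc e t → t = u ∨ t = v := by
  rcases h with h | h
  · exact ⟨G.snd e, Or.inr rfl, fun hh => G.no_loop e (h.trans hh.symm),
      fun t ht => inc_pair (Or.inl h) (Or.inr rfl)
        (fun hh => G.no_loop e (h.trans hh)) ht⟩
  · exact ⟨G.fst e, Or.inl rfl, fun hh => G.no_loop e (hh.trans h.symm),
      fun t ht => inc_pair (Or.inr h) (Or.inl rfl)
        (fun hh => G.no_loop e (hh.symm.trans h.symm)) ht⟩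

lemma matching_subset {N N' : Set E} (hsub : N' ⊆ N) (hm : G.IsMatching N) :
    G.IsMatching N' := fun e he f hf hef v => hm e (hsub he) f (hsub hf) hef v

lemma matching_eq_of_inc {N : Set E} (hm : G.IsMatching N) {e f : E} {v : V}
    (he : e ∈ N) (hf : f ∈ N) (hev : G.Inc e v) (hfv : G.Inc f v) : e = f := by
  by_contra hne
  exact hm e he f hf hne v ⟨hev, hfv⟩

lemma covers_congr {N : Set E} {S S' : Set V} (h : CoversExactly G N S) (hss : S = S') :
    CoversExactly G N S' := hss ▸ h

lemma covers_mem {N : Set E} {S : Set V} {e : E} {v : V} (h : CoversExactly G N S)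
    (he : e ∈ N) (hv : G.Inc e v) : v ∈ S := (h v).mp ⟨e, he, hv⟩

lemma covers_diff {N : Set E} {S : Set V} {e : E} {x y : V} (hm : G.IsMatching N)
    (hc : CoversExactly G N S) (he : e ∈ N) (hx : G.Inc e x) (hy : G.Inc e y) (hxy : x ≠ y)
    (hends : ∀ t, G.Inc e t → t = x ∨ t = y) :
    CoversExactly G (N \ {e}) (S \ {x, y}) := by
  intro v
  constructor
  · rintro ⟨f, ⟨hfN, hfe⟩, hfv⟩
    simp only [Set.mem_singleton_iff] at hfe
    refine ⟨(hc v).mp ⟨f, hfN, hfv⟩, ?_⟩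
    rintro (rfl | rfl)
    · exact hfe (matching_eq_of_inc hm hfN he hfv hx)
    · exact hfe (matching_eq_of_inc hm hfN he hfv hy)
  · rintro ⟨hvS, hv2⟩
    obtain ⟨f, hfN, hfv⟩ := (hc v).mpr hvS
    have hfe : f ≠ e := by
      rintro rfl
      exact hv2 (by rcases hends v hfv with rfl | rfl <;> simp)
    exact ⟨f, ⟨hfN, by simpa using hfe⟩, hfv⟩

lemma matching_insert {N : Set E} {S : Set V} {e : E} {x y : V} (hm : G.IsMatching N)
    (hc : CoversExactly G N S) (hx : x ∉ S) (hy : y ∉ S)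
    (hends : ∀ t, G.Inc e t → t = x ∨ t = y) : G.IsMatching (insert e N) := by
  rintro f (rfl | hf) g (rfl | hg) hfg v ⟨hfv, hgv⟩
  · exact hfg rfl
  · rcases hends v hfv with rfl | rfl
    · exact hx (covers_mem hc hg hgv)
    · exact hy (covers_mem hc hg hgv)
  · rcases hends v hgv with rfl | rfl
    · exact hx (covers_mem hc hf hfv)
    · exact hy (covers_mem hc hf hfv)
  · exact hm f hf g hg hfg v ⟨hfv, hgv⟩

lemma covers_insert {N : Set E} {S : Set V} {e : E} {x y : V}
    (hc : CoversExactly G N S) (hxe : G.Inc e x) (hye : G.Inc e y)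
    (hends : ∀ t, G.Inc e t → t = x ∨ t = y) :
    CoversExactly G (insert e N) (insert x (insert y S)) := by
  intro v
  constructor
  · rintro ⟨f, (rfl | hfN), hfv⟩
    · rcases hends v hfv with rfl | rfl <;> simp
    · simp only [Set.mem_insert_iff]
      exact Or.inr (Or.inr ((hc v).mp ⟨f, hfN, hfv⟩))
  · rintro (rfl | rfl | hvS)
    · exact ⟨e, Set.mem_insert _ _, hxe⟩
    · exact ⟨e, Set.mem_insert _ _, hye⟩
    · obtain ⟨f, hfN, hfv⟩ := (hc v).mpr hvS
      exact ⟨f, Set.mem_insert_of_mem _ hfN, hfv⟩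

end WProof
namespace WProof

open Multigraph

variable {V E : Type} {G : Multigraph V E} {c : E → V → Bool}

lemma no_mono_pm (h : G.IsWState c) {N : Set E} (hsub : N ⊆ G.MonoEdges c)
    (hm : G.IsMatching N) (hc : CoversExactly G N Set.univ) : False := by
  obtain ⟨-, hcond, -, -⟩ := h
  have hpm : G.IsPerfectMatching N := by
    refine ⟨fun e _ => ⟨trivial, trivial⟩, fun v _ => ?_⟩
    obtain ⟨e, heN, hev⟩ := (hc v).mpr trivial
    exact ⟨e, ⟨heN, hev⟩, fun f ⟨hfN, hfv⟩ => matching_eq_of_inc hm hfN heN hfv hev⟩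
  obtain ⟨e, ⟨heN, hbi⟩, -⟩ := hcond N hpm
  exact hsub heN hbi

/-- For every vertex `v` there is a "partner" `w` and a monochromatic near-perfect
matching covering everything except `v` and `w`. -/
lemma near_matching (h : G.IsWState c) (v : V) :
    ∃ w N, w ≠ v ∧ N ⊆ G.MonoEdges c ∧ G.IsMatching N ∧
      CoversExactly G N (Set.univ \ {v, w}) := by
  obtain ⟨hcov, hcond, hvert, hnored⟩ := h
  obtain ⟨e, hev, hred⟩ := hvert v
  have hbi : G.Bichromatic c e := by
    intro hmono
    have h1 : c e (G.fst e) = false := hnored e (fun hne => hne hmono)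
    have h2 : c e (G.snd e) = false := by rw [← hmono]; exact h1
    rcases hev with hh | hh
    · rw [hh] at h1; rw [h1] at hred; exact Bool.false_ne_true hred
    · rw [hh] at h2; rw [h2] at hred; exact Bool.false_ne_true hred
  obtain ⟨M, hMpm, heM⟩ := hcov e
  have hMm : G.IsMatching M := by
    intro f hf g hg hfg t ⟨hft, hgt⟩
    obtain ⟨e', he', hu⟩ := hMpm.2 t trivial
    exact hfg ((hu f ⟨hf, hft⟩).trans (hu g ⟨hg, hgt⟩).symm)
  obtain ⟨w, hew, hwv, hends⟩ := exists_other hev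
  have huniq : ∀ f ∈ M, G.Bichromatic c f → f = e := by
    obtain ⟨e', ⟨he'M, he'bi⟩, hu⟩ := hcond M hMpm
    intro f hf hfbi
    exact (hu f ⟨hf, hfbi⟩).trans (hu e ⟨heM, hbi⟩).symm
  have hMcov : CoversExactly G M Set.univ := by
    intro t
    refine ⟨fun _ => trivial, fun _ => ?_⟩
    obtain ⟨e', he', -⟩ := hMpm.2 t trivial
    exact ⟨e', he'.1, he'.2⟩
  refine ⟨w, M \ {e}, hwv, ?_, matching_subset Set.diff_subset hMm, ?_⟩
  · rintro f ⟨hfM, hfe⟩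
    simp only [Set.mem_singleton_iff] at hfe
    intro hfbi
    exact hfe (huniq f hfM hfbi)
  · exact covers_diff hMm hMcov heM hev hew (Ne.symm hwv) hends

/-- Paths of a given length. -/
def pathN (G : Multigraph V E) (F : Set E) : ℕ → V → V → Prop
  | 0, a, b => a = b
  | n + 1, a, b => ∃ x, G.AdjIn F a x ∧ pathN G F n x b

lemma reach_pathN {F : Set E} {a b : V} (h : G.ReachOn F Set.univ a b) :
    ∃ n, pathN G F n a b := by
  induction h using Relation.ReflTransGen.head_induction_on with
  | refl => exact ⟨0, rfl⟩
  | head step _ ih =>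
      obtain ⟨n, p⟩ := ih
      exact ⟨n + 1, _, step.2.2, p⟩

lemma adjIn_symm {F : Set E} {u v : V} (h : G.AdjIn F u v) : G.AdjIn F v u :=
  ⟨h.1.symm, by obtain ⟨e, he, h1, h2⟩ := h.2; exact ⟨e, he, h2, h1⟩⟩

lemma reach_of_adj {F : Set E} {u v : V} (h : G.AdjIn F u v) :
    G.ReachOn F Set.univ u v :=
  Relation.ReflTransGen.single ⟨trivial, trivial, h⟩

lemma reach_symm {F : Set E} {u v : V} (h : G.ReachOn F Set.univ u v) :
    G.ReachOn F Set.univ v u := by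
  have hs : Symmetric fun a b : V => a ∈ Set.univ ∧ b ∈ Set.univ ∧ G.AdjIn F a b :=
    fun a b ⟨_, _, hab⟩ => ⟨trivial, trivial, adjIn_symm hab⟩
  exact (@Relation.ReflTransGen.symmetric _ _ ⟨fun a b hab => hs hab⟩).symm _ _ h

lemma reach_trans {F : Set E} {u v t : V} (h1 : G.ReachOn F Set.univ u v)
    (h2 : G.ReachOn F Set.univ v t) : G.ReachOn F Set.univ u t :=
  Relation.ReflTransGen.trans h1 h2

end WProof
namespace WProof

open Multigraph

variable {V E : Type} {G : Multigraph V E} {c : E → V → Bool}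

lemma even_of_covers [Fintype V] :
    ∀ (n : ℕ) (N : Set E) (K : Set V), K.ncard = n → G.IsMatching N →
      CoversExactly G N K → Even n := by
  intro n
  induction n using Nat.strong_induction_on with
  | _ n ih =>
    intro N K hn hm hc
    rcases Set.eq_empty_or_nonempty K with rfl | ⟨y, hy⟩
    · rw [Set.ncard_empty] at hn; exact ⟨0, by omega⟩
    · obtain ⟨e, heN, hey⟩ := (hc y).mpr hy
      obtain ⟨y', hey', hy'y, hends⟩ := exists_other hey
      have hy'K : y' ∈ K := covers_mem hc heN hey'
      have hsub : ({y, y'} : Set V) ⊆ K := by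
        rintro t (rfl | rfl) <;> assumption
      have h2 : ({y, y'} : Set V).ncard = 2 := Set.ncard_pair (Ne.symm hy'y)
      have hK2 : 2 ≤ n := by
        rw [← hn, ← h2]
        exact Set.ncard_le_ncard hsub (Set.toFinite K)
      have hcd : CoversExactly G (N \ {e}) (K \ {y, y'}) :=
        covers_diff hm hc heN hey hey' (Ne.symm hy'y) hends
      have hcard : (K \ {y, y'}).ncard = n - 2 := by
        rw [Set.ncard_diff hsub, h2, hn]
      obtain ⟨r, hr⟩ := ih (n - 2) (by omega) (N \ {e}) (K \ {y, y'}) hcard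
        (matching_subset Set.diff_subset hm) hcd
      exact ⟨r + 1, by omega⟩

/-- The monochromatic component ("class") of a vertex `t`. -/
def cls (G : Multigraph V E) (c : E → V → Bool) (t : V) : Set V :=
  {u | u ∈ Set.univ ∧ G.ReachOn (G.MonoEdges c) Set.univ u t}

lemma cls_self (t : V) : t ∈ cls G c t := ⟨trivial, Relation.ReflTransGen.refl⟩

lemma cls_closed {t y y' : V} {e : E} (he : e ∈ G.MonoEdges c) (hy : G.Inc e y)
    (hy' : G.Inc e y') (hyK : y ∈ cls G c t) : y' ∈ cls G c t := by
  by_cases hne : y' = y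
  · exact hne ▸ hyK
  · exact ⟨trivial, reach_trans (reach_of_adj ⟨hne, e, he, hy', hy⟩) hyK.2⟩

/-- Restriction of a mono matching to a class. -/
lemma restrict_covers {t : V} {N : Set E} {A : Set V} (hNF : N ⊆ G.MonoEdges c)
    (hm : G.IsMatching N) (hc : CoversExactly G N (Set.univ \ A)) :
    CoversExactly G {e ∈ N | G.fst e ∈ cls G c t} (cls G c t \ A) := by
  intro v
  constructor
  · rintro ⟨e, ⟨heN, hefst⟩, hev⟩
    have hvK : v ∈ cls G c t := cls_closed (hNF heN) (Or.inl rfl) hev hefst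
    have := covers_mem hc heN hev
    exact ⟨hvK, this.2⟩
  · rintro ⟨hvK, hvA⟩
    obtain ⟨e, heN, hev⟩ := (hc v).mpr ⟨trivial, hvA⟩
    exact ⟨e, ⟨heN, cls_closed (hNF heN) hev (Or.inl rfl) hvK⟩, hev⟩

end WProof
namespace WProof

open Multigraph

variable {V E : Type} {G : Multigraph V E} {c : E → V → Bool}

set_option maxHeartbeats 1000000 in
lemma walk [Fintype V] (a b z w : V)
    (hab : a ≠ b) (hza : z ≠ a) (hzb : z ≠ b) (hzw : z ≠ w) (hwa : w ≠ a) (hwb : w ≠ b) :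
    ∀ n : ℕ, ∀ (X : Set V) (s u : V) (P Q : Set E),
      (Set.univ \ X).ncard ≤ n →
      P ⊆ G.MonoEdges c → G.IsMatching P →
      CoversExactly G P (Set.univ \ {a, b, z, s}) →
      Q ⊆ G.MonoEdges c → G.IsMatching Q →
      CoversExactly G Q (Set.univ \ {u, w}) →
      (∃ m', m' ∈ G.MonoEdges c ∧ G.Inc m' s ∧ G.Inc m' u) →
      s ≠ a → s ≠ b → s ≠ z → s ≠ w → u ≠ a → u ≠ b → u ≠ z → u ≠ w → s ≠ u →
      z ∈ X → s ∈ X → u ∉ X → a ∉ X → b ∉ X → w ∉ X →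
      (∀ y ∈ X, ∃ e ∈ Q, G.fst e ∈ X ∧ G.snd e ∈ X ∧ G.Inc e y) →
      (∀ y ∈ X, y ≠ z → y ≠ s → ∃ e ∈ P, G.fst e ∈ X ∧ G.snd e ∈ X ∧ G.Inc e y) →
      (∃ N', N' ⊆ G.MonoEdges c ∧ G.IsMatching N' ∧
          CoversExactly G N' (Set.univ \ {z, a})) ∨
      (∃ N', N' ⊆ G.MonoEdges c ∧ G.IsMatching N' ∧
          CoversExactly G N' (Set.univ \ {z, b})) ∨
      (∃ N', N' ⊆ G.MonoEdges c ∧ G.IsMatching N' ∧ CoversExactly G N' Set.univ) := by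
  intro n
  induction n with
  | zero =>
      intro X s u P Q hn _ _ _ _ _ _ _ _ _ _ _ _ _ _ _ _ _ _ huX _ _ _ _ _
      have hemp : Set.univ \ X = ∅ := (Set.ncard_eq_zero (Set.toFinite _)).mp (Nat.le_zero.mp hn)
      exact absurd (Set.eq_empty_iff_forall_notMem.mp hemp u ⟨trivial, huX⟩) not_false
  | succ n ih =>
      intro X s u P Q hn hPmono hPm hPc hQmono hQm hQc hcouple
        hsa hsb hsz hsw hua hub huz huw hsu hzX hsX huX haX hbX hwX hI8 hI9
      obtain ⟨m', hm'mono, hm's, hm'u⟩ := hcouple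
      have hm'ends : ∀ t, G.Inc m' t → t = s ∨ t = u := fun t ht => inc_pair hm's hm'u hsu ht
      have huP : u ∈ Set.univ \ ({a, b, z, s} : Set V) :=
        ⟨trivial, by
          simp only [Set.mem_insert_iff, Set.mem_singleton_iff]
          push_neg
          exact ⟨hua, hub, huz, Ne.symm hsu⟩⟩
      obtain ⟨m, hmP, hmu⟩ := (hPc u).mpr huP
      obtain ⟨v, hmv, hvu, hmends⟩ := exists_other hmu
      have hvP : v ∈ Set.univ \ ({a, b, z, s} : Set V) := covers_mem hPc hmP hmv
      have hv4 := hvP.2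
      simp only [Set.mem_insert_iff, Set.mem_singleton_iff] at hv4
      push_neg at hv4
      obtain ⟨hva, hvb, hvz, hvs⟩ := hv4
      have hvX : v ∉ X := by
        intro hv
        obtain ⟨e, heP, hef, hes, hev⟩ := hI9 v hv hvz hvs
        have hem : e = m := matching_eq_of_inc hPm heP hmP hev hmv
        subst hem
        rcases hmu with h | h
        · exact huX (h ▸ hef)
        · exact huX (h ▸ hes)
      by_cases hvw : v = w
      · -- found an augmenting step: a mono perfect matching
        subst hvw
        refine Or.inr (Or.inr ⟨insert m Q, ?_, ?_, ?_⟩)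
        · rintro f (rfl | hf)
          · exact hPmono hmP
          · exact hQmono hf
        · exact matching_insert hQm hQc (by simp) (by simp) hmends
        · refine covers_congr (covers_insert hQc hmu hmv hmends) ?_
          ext t
          by_cases h1 : t = u <;> by_cases h2 : t = v <;> simp [h1, h2]
      · -- continue the walk
        have hvQ : v ∈ Set.univ \ ({u, w} : Set V) :=
          ⟨trivial, by
            simp only [Set.mem_insert_iff, Set.mem_singleton_iff]
            push_neg
            exact ⟨hvu, hvw⟩⟩
        obtain ⟨n', hn'Q, hn'v⟩ := (hQc v).mpr hvQ
        obtain ⟨x, hn'x, hxv, hn'ends⟩ := exists_other hn'v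
        have hxQ : x ∈ Set.univ \ ({u, w} : Set V) := covers_mem hQc hn'Q hn'x
        have hx2 := hxQ.2
        simp only [Set.mem_insert_iff, Set.mem_singleton_iff] at hx2
        push_neg at hx2
        obtain ⟨hxu, hxw⟩ := hx2
        have hmQ : m ∉ Q := fun hmQ' => (covers_mem hQc hmQ' hmu).2 (by simp)
        have hxX : x ∉ X := by
          intro hx
          obtain ⟨e, heQ, hef, hes, hex⟩ := hI8 x hx
          have hen : e = n' := matching_eq_of_inc hQm heQ hn'Q hex hn'x
          subst hen
          rcases hn'v with h | h
          · exact hvX (h ▸ hef)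
          · exact hvX (h ▸ hes)
        have hxz : x ≠ z := fun hh => hxX (hh ▸ hzX)
        have hxs : x ≠ s := fun hh => hxX (hh ▸ hsX)
        have hc1 : CoversExactly G (P \ {m})
            ((Set.univ \ {a, b, z, s}) \ {u, v}) :=
          covers_diff hPm hPc hmP hmu hmv (Ne.symm hvu) hmends
        have hm1 : G.IsMatching (P \ {m}) := matching_subset Set.diff_subset hPm
        by_cases hxa : x = a
        · -- output: matching covering exactly univ \ {z, b}
          subst hxa
          have hm2 : G.IsMatching (insert n' (P \ {m})) :=
            matching_insert hm1 hc1 (fun hh => hh.2 (by simp)) (fun hh => hh.1.2 (by simp))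
              hn'ends
          have hc2 := covers_insert hc1 hn'v hn'x hn'ends
          have hm3 : G.IsMatching (insert m' (insert n' (P \ {m}))) := by
            refine matching_insert hm2 hc2 ?_ ?_ hm'ends
            · rintro (h | h | hh)
              exacts [hvs h.symm, hsa h, hh.1.2 (by simp)]
            · rintro (h | h | hh)
              exacts [hvu h.symm, hua h, hh.2 (by simp)]
          refine Or.inr (Or.inl ⟨insert m' (insert n' (P \ {m})), ?_, hm3, ?_⟩)
          · rintro f (rfl | rfl | ⟨hf, -⟩)
            · exact hm'mono
            · exact hQmono hn'Q
            · exact hPmono hf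
          · refine covers_congr (covers_insert hc2 hm's hm'u hm'ends) ?_
            ext t
            simp only [Set.mem_insert_iff, Set.mem_diff, Set.mem_univ, true_and,
              Set.mem_singleton_iff, not_or]
            constructor
            · rintro (rfl | rfl | rfl | rfl | ⟨h1, h2⟩)
              · exact ⟨hsz, hsb⟩
              · exact ⟨huz, hub⟩
              · exact ⟨hvz, hvb⟩
              · exact ⟨Ne.symm hza, hab⟩
              · exact ⟨h1.2.2.1, h1.2.1⟩
            · rintro ⟨h1, h2⟩
              by_cases e1 : t = s
              · exact Or.inl e1
              by_cases e2 : t = u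
              · exact Or.inr (Or.inl e2)
              by_cases e3 : t = v
              · exact Or.inr (Or.inr (Or.inl e3))
              by_cases e4 : t = x
              · exact Or.inr (Or.inr (Or.inr (Or.inl e4)))
              · exact Or.inr (Or.inr (Or.inr (Or.inr ⟨⟨e4, h2, h1, e1⟩, e2, e3⟩)))
        · by_cases hxb : x = b
          · -- output: matching covering exactly univ \ {z, a}
            subst hxb
            have hm2 : G.IsMatching (insert n' (P \ {m})) :=
              matching_insert hm1 hc1 (fun hh => hh.2 (by simp)) (fun hh => hh.1.2 (by simp))
                hn'ends
            have hc2 := covers_insert hc1 hn'v hn'x hn'ends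
            have hm3 : G.IsMatching (insert m' (insert n' (P \ {m}))) := by
              refine matching_insert hm2 hc2 ?_ ?_ hm'ends
              · rintro (h | h | hh)
                exacts [hvs h.symm, hsb h, hh.1.2 (by simp)]
              · rintro (h | h | hh)
                exacts [hvu h.symm, hub h, hh.2 (by simp)]
            refine Or.inl ⟨insert m' (insert n' (P \ {m})), ?_, hm3, ?_⟩
            · rintro f (rfl | rfl | ⟨hf, -⟩)
              · exact hm'mono
              · exact hQmono hn'Q
              · exact hPmono hf
            · refine covers_congr (covers_insert hc2 hm's hm'u hm'ends) ?_
              ext t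
              simp only [Set.mem_insert_iff, Set.mem_diff, Set.mem_univ, true_and,
                Set.mem_singleton_iff, not_or]
              constructor
              · rintro (rfl | rfl | rfl | rfl | ⟨h1, h2⟩)
                · exact ⟨hsz, hsa⟩
                · exact ⟨huz, hua⟩
                · exact ⟨hvz, hva⟩
                · exact ⟨Ne.symm hzb, Ne.symm hab⟩
                · exact ⟨h1.2.2.1, h1.1⟩
              · rintro ⟨h1, h2⟩
                by_cases e1 : t = s
                · exact Or.inl e1
                by_cases e2 : t = u
                · exact Or.inr (Or.inl e2)
                by_cases e3 : t = v
                · exact Or.inr (Or.inr (Or.inl e3))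
                by_cases e4 : t = x
                · exact Or.inr (Or.inr (Or.inr (Or.inl e4)))
                · exact Or.inr (Or.inr (Or.inr (Or.inr ⟨⟨h2, e4, h1, e1⟩, e2, e3⟩)))
          · -- recursive step
            set X' : Set V := insert u (insert v X) with hX'
            have hmX' : ∀ tt, G.Inc m tt → tt ∈ X' := by
              intro tt htt
              rcases hmends tt htt with rfl | rfl <;> simp [hX']
            have hsX' : s ∈ X' := by simp [hX', hsX]
            have hzX' : z ∈ X' := by simp [hX', hzX]
            have hcard : (Set.univ \ X').ncard ≤ n := by
              have h1 : Set.univ \ X' ⊆ (Set.univ \ X) \ {u} := by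
                rintro t ⟨-, ht⟩
                simp only [hX', Set.mem_insert_iff] at ht
                push_neg at ht
                exact ⟨⟨trivial, ht.2.2⟩, by simp [ht.1]⟩
              have h2 := Set.ncard_le_ncard h1 (Set.toFinite _)
              rw [Set.ncard_diff_singleton_of_mem (show u ∈ Set.univ \ X from ⟨trivial, huX⟩)] at h2
              omega
            have hcP' : CoversExactly G (insert m' (P \ {m}))
                (insert s (insert u ((Set.univ \ {a, b, z, s}) \ {u, v}))) :=
              covers_insert hc1 hm's hm'u hm'ends
            have hmP' : G.IsMatching (insert m' (P \ {m})) :=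
              matching_insert hm1 hc1 (fun hh => hh.1.2 (by simp)) (fun hh => hh.2 (by simp))
                hm'ends
            have hcP'' : CoversExactly G (insert m' (P \ {m}))
                (Set.univ \ {a, b, z, v}) := by
              refine covers_congr hcP' ?_
              ext t
              simp only [Set.mem_insert_iff, Set.mem_diff, Set.mem_univ, true_and,
                Set.mem_singleton_iff, not_or]
              constructor
              · rintro (rfl | rfl | ⟨h1, h2⟩)
                · exact ⟨hsa, hsb, hsz, Ne.symm hvs⟩
                · exact ⟨hua, hub, huz, Ne.symm hvu⟩
                · exact ⟨h1.1, h1.2.1, h1.2.2.1, h2.2⟩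
              · rintro ⟨ha1, hb1, hz1, hv1⟩
                by_cases e1 : t = s
                · exact Or.inl e1
                by_cases e2 : t = u
                · exact Or.inr (Or.inl e2)
                · exact Or.inr (Or.inr ⟨⟨ha1, hb1, hz1, e1⟩, e2, hv1⟩)
            have hc1q : CoversExactly G (Q \ {n'}) ((Set.univ \ {u, w}) \ {v, x}) :=
              covers_diff hQm hQc hn'Q hn'v hn'x (Ne.symm hxv) hn'ends
            have hm1q : G.IsMatching (Q \ {n'}) := matching_subset Set.diff_subset hQm
            have hmQ'' : G.IsMatching (insert m (Q \ {n'})) := by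
              refine matching_insert hm1q hc1q ?_ ?_ hmends
              · rintro ⟨⟨-, hcc⟩, -⟩
                exact hcc (by simp)
              · rintro ⟨-, hcc⟩
                exact hcc (by simp)
            have hcQ'' : CoversExactly G (insert m (Q \ {n'}))
                (Set.univ \ {x, w}) := by
              refine covers_congr (covers_insert hc1q hmu hmv hmends) ?_
              ext t
              simp only [Set.mem_insert_iff, Set.mem_diff, Set.mem_univ, true_and,
                Set.mem_singleton_iff, not_or]
              constructor
              · rintro (rfl | rfl | ⟨h1, h2⟩)
                · exact ⟨Ne.symm hxu, huw⟩
                · exact ⟨Ne.symm hxv, hvw⟩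
                · exact ⟨h2.2, h1.2⟩
              · rintro ⟨hx1, hw1⟩
                by_cases e1 : t = u
                · exact Or.inl e1
                by_cases e2 : t = v
                · exact Or.inr (Or.inl e2)
                · exact Or.inr (Or.inr ⟨⟨e1, hw1⟩, e2, hx1⟩)
            refine ih X' v x (insert m' (P \ {m})) (insert m (Q \ {n'})) hcard
              ?_ hmP' hcP'' ?_ hmQ'' hcQ'' ⟨n', hQmono hn'Q, hn'v, hn'x⟩
              hva hvb hvz hvw hxa hxb hxz hxw (Ne.symm hxv)
              hzX' ?_ ?_ ?_ ?_ ?_ ?_ ?_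
            · rintro f (rfl | ⟨hf, -⟩)
              · exact hm'mono
              · exact hPmono hf
            · rintro f (rfl | ⟨hf, -⟩)
              · exact hPmono hmP
              · exact hQmono hf
            · simp [hX']
            · simp only [hX', Set.mem_insert_iff]
              push_neg
              exact ⟨hxu, hxv, hxX⟩
            · simp only [hX', Set.mem_insert_iff]
              push_neg
              exact ⟨Ne.symm hua, Ne.symm hva, haX⟩
            · simp only [hX', Set.mem_insert_iff]
              push_neg
              exact ⟨Ne.symm hub, Ne.symm hvb, hbX⟩
            · simp only [hX', Set.mem_insert_iff]
              push_neg
              exact ⟨Ne.symm huw, Ne.symm hvw, hwX⟩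
            · -- I8 for the new state
              rintro y hy
              simp only [hX', Set.mem_insert_iff] at hy
              rcases hy with rfl | rfl | hyX
              · exact ⟨m, Set.mem_insert _ _, hmX' _ (Or.inl rfl), hmX' _ (Or.inr rfl), hmu⟩
              · exact ⟨m, Set.mem_insert _ _, hmX' _ (Or.inl rfl), hmX' _ (Or.inr rfl), hmv⟩
              · obtain ⟨e, heQ, hef, hes, hey⟩ := hI8 y hyX
                have hen' : e ≠ n' := by
                  rintro rfl
                  rcases hn'v with h | h
                  · exact hvX (h ▸ hef)
                  · exact hvX (h ▸ hes)
                exact ⟨e, Set.mem_insert_of_mem _ ⟨heQ, by simp [hen']⟩,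
                  by simp [hX', hef], by simp [hX', hes], hey⟩
            · -- I9 for the new state
              rintro y hy hyz hyv
              simp only [hX', Set.mem_insert_iff] at hy
              have hm'X' : ∀ tt, G.Inc m' tt → tt ∈ X' := by
                intro tt htt
                rcases hm'ends tt htt with rfl | rfl
                · exact hsX'
                · simp [hX']
              rcases hy with rfl | rfl | hyX
              · exact ⟨m', Set.mem_insert _ _, hm'X' _ (Or.inl rfl), hm'X' _ (Or.inr rfl), hm'u⟩
              · exact absurd rfl hyv
              · by_cases hys : y = s
                · subst hys
                  exact ⟨m', Set.mem_insert _ _, hm'X' _ (Or.inl rfl), hm'X' _ (Or.inr rfl), hm's⟩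
                · obtain ⟨e, heP, hef, hes, hey⟩ := hI9 y hyX hyz hys
                  have hem : e ≠ m := by
                    rintro rfl
                    rcases hmu with h | h
                    · exact huX (h ▸ hef)
                    · exact huX (h ▸ hes)
                  exact ⟨e, Set.mem_insert_of_mem _ ⟨heP, by simp [hem]⟩,
                    by simp [hX', hef], by simp [hX', hes], hey⟩

end WProof
namespace WProof

open Multigraph

variable {V E : Type} {G : Multigraph V E} {c : E → V → Bool}

set_option maxHeartbeats 1000000 in
/-- Key lemma: two vertices joined by a monochromatic path cannot be the two vertices
missed by a monochromatic near-perfect matching. -/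
lemma main_lemma [Fintype V] (h : G.IsWState c) :
    ∀ k : ℕ, ∀ (a b : V) (N : Set E), a ≠ b → N ⊆ G.MonoEdges c → G.IsMatching N →
      CoversExactly G N (Set.univ \ {a, b}) → pathN G (G.MonoEdges c) k a b → False := by
  intro k
  induction k using Nat.strong_induction_on with
  | _ k ih =>
    rcases k with _ | k
    · intro a b N hab _ _ _ hp
      exact hab hp
    · intro a b N hab hNmono hNm hNc hp
      obtain ⟨x, hax, hp'⟩ := hp
      obtain ⟨hax1, e, heF, hea, hex⟩ := hax
      by_cases hxb : x = b
      · subst hxb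
        have hends : ∀ t, G.Inc e t → t = a ∨ t = x := fun t ht => inc_pair hea hex hax1 ht
        refine no_mono_pm h (N := insert e N) ?_ ?_ ?_
        · rintro f (rfl | hf)
          · exact heF
          · exact hNmono hf
        · exact matching_insert hNm hNc (fun hh => hh.2 (by simp)) (fun hh => hh.2 (by simp))
            hends
        · refine covers_congr (covers_insert hNc hea hex hends) ?_
          ext t
          by_cases h1 : t = a <;> by_cases h2 : t = x <;> simp [h1, h2]
      · have hk1 : k ≠ 0 := by
          rintro rfl
          exact hxb hp'
        have hza : x ≠ a := Ne.symm hax1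
        obtain ⟨w, Qz, hwz, hQmono, hQm, hQc⟩ := near_matching h x
        have hpath1 : pathN G (G.MonoEdges c) 1 x a :=
          ⟨a, adjIn_symm ⟨hax1, e, heF, hea, hex⟩, rfl⟩
        by_cases hwa : w = a
        · exact ih 1 (by omega) x a Qz hza hQmono hQm (hwa ▸ hQc) hpath1
        · by_cases hwb : w = b
          · exact ih k (by omega) x b Qz hxb hQmono hQm (hwb ▸ hQc) hp'
          · have hxP : x ∈ Set.univ \ ({a, b} : Set V) := by
              refine ⟨trivial, ?_⟩
              simp only [Set.mem_insert_iff, Set.mem_singleton_iff, not_or]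
              exact ⟨hza, hxb⟩
            obtain ⟨m1, hm1N, hm1x⟩ := (hNc x).mpr hxP
            obtain ⟨v1, hm1v, hv1x, hm1ends⟩ := exists_other hm1x
            have hv1ab : v1 ∈ Set.univ \ ({a, b} : Set V) := covers_mem hNc hm1N hm1v
            have hv1ab2 := hv1ab.2
            simp only [Set.mem_insert_iff, Set.mem_singleton_iff, not_or] at hv1ab2
            obtain ⟨hv1a, hv1b⟩ := hv1ab2
            by_cases hv1w : v1 = w
            · subst hv1w
              refine no_mono_pm h (N := insert m1 Qz) ?_ ?_ ?_
              · rintro f (rfl | hf)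
                · exact hNmono hm1N
                · exact hQmono hf
              · exact matching_insert hQm hQc (fun hh => hh.2 (by simp))
                  (fun hh => hh.2 (by simp)) hm1ends
              · refine covers_congr (covers_insert hQc hm1x hm1v hm1ends) ?_
                ext t
                by_cases h1 : t = x <;> by_cases h2 : t = v1 <;> simp [h1, h2]
            · have hv1Q : v1 ∈ Set.univ \ ({x, w} : Set V) := by
                refine ⟨trivial, ?_⟩
                simp only [Set.mem_insert_iff, Set.mem_singleton_iff, not_or]
                exact ⟨hv1x, hv1w⟩
              obtain ⟨n1, hn1Q, hn1v⟩ := (hQc v1).mpr hv1Q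
              obtain ⟨x1, hn1x1, hx1v, hn1ends⟩ := exists_other hn1v
              have hx1m : x1 ∈ Set.univ \ ({x, w} : Set V) := covers_mem hQc hn1Q hn1x1
              have hx1m2 := hx1m.2
              simp only [Set.mem_insert_iff, Set.mem_singleton_iff, not_or] at hx1m2
              obtain ⟨hx1x, hx1w⟩ := hx1m2
              have hc1 : CoversExactly G (N \ {m1}) ((Set.univ \ {a, b}) \ {x, v1}) :=
                covers_diff hNm hNc hm1N hm1x hm1v (Ne.symm hv1x) hm1ends
              have hm1m : G.IsMatching (N \ {m1}) := matching_subset Set.diff_subset hNm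
              by_cases hx1a : x1 = a
              · subst hx1a
                refine ih k (by omega) x b (insert n1 (N \ {m1})) hxb ?_ ?_ ?_ hp'
                · rintro f (rfl | ⟨hf, -⟩)
                  · exact hQmono hn1Q
                  · exact hNmono hf
                · exact matching_insert hm1m hc1 (fun hh => hh.2 (by simp))
                    (fun hh => hh.1.2 (by simp)) hn1ends
                · refine covers_congr (covers_insert hc1 hn1v hn1x1 hn1ends) ?_
                  ext t
                  simp only [Set.mem_insert_iff, Set.mem_diff, Set.mem_univ, true_and,
                    Set.mem_singleton_iff, not_or]
                  constructor
                  · rintro (rfl | rfl | ⟨h1, h2⟩)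
                    · exact ⟨hv1x, hv1b⟩
                    · exact ⟨Ne.symm hza, hab⟩
                    · exact ⟨h2.1, h1.2⟩
                  · rintro ⟨h1, h2⟩
                    by_cases e1 : t = v1
                    · exact Or.inl e1
                    by_cases e2 : t = x1
                    · exact Or.inr (Or.inl e2)
                    · exact Or.inr (Or.inr ⟨⟨e2, h2⟩, h1, e1⟩)
              · by_cases hx1b : x1 = b
                · subst hx1b
                  refine ih 1 (by omega) x a (insert n1 (N \ {m1})) hza ?_ ?_ ?_ hpath1
                  · rintro f (rfl | ⟨hf, -⟩)
                    · exact hQmono hn1Q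
                    · exact hNmono hf
                  · exact matching_insert hm1m hc1 (fun hh => hh.2 (by simp))
                      (fun hh => hh.1.2 (by simp)) hn1ends
                  · refine covers_congr (covers_insert hc1 hn1v hn1x1 hn1ends) ?_
                    ext t
                    simp only [Set.mem_insert_iff, Set.mem_diff, Set.mem_univ, true_and,
                      Set.mem_singleton_iff, not_or]
                    constructor
                    · rintro (rfl | rfl | ⟨h1, h2⟩)
                      · exact ⟨hv1x, hv1a⟩
                      · exact ⟨Ne.symm hxb, Ne.symm hab⟩
                      · exact ⟨h2.1, h1.1⟩
                    · rintro ⟨h1, h2⟩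
                      by_cases e1 : t = v1
                      · exact Or.inl e1
                      by_cases e2 : t = x1
                      · exact Or.inr (Or.inl e2)
                      · exact Or.inr (Or.inr ⟨⟨h2, e2⟩, h1, e1⟩)
                · -- call the walk lemma
                  have hcP : CoversExactly G (N \ {m1}) (Set.univ \ {a, b, x, v1}) := by
                    refine covers_congr hc1 ?_
                    ext t
                    simp only [Set.mem_diff, Set.mem_univ, true_and, Set.mem_insert_iff,
                      Set.mem_singleton_iff, not_or]
                    tauto
                  have hcq1 : CoversExactly G (Qz \ {n1}) ((Set.univ \ {x, w}) \ {v1, x1}) :=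
                    covers_diff hQm hQc hn1Q hn1v hn1x1 (Ne.symm hx1v) hn1ends
                  have hmq1 : G.IsMatching (Qz \ {n1}) := matching_subset Set.diff_subset hQm
                  have hmQ' : G.IsMatching (insert m1 (Qz \ {n1})) :=
                    matching_insert hmq1 hcq1 (fun hh => hh.1.2 (by simp))
                      (fun hh => hh.2 (by simp)) hm1ends
                  have hcQ' : CoversExactly G (insert m1 (Qz \ {n1}))
                      (Set.univ \ {x1, w}) := by
                    refine covers_congr (covers_insert hcq1 hm1x hm1v hm1ends) ?_
                    ext t
                    simp only [Set.mem_insert_iff, Set.mem_diff, Set.mem_univ, true_and,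
                      Set.mem_singleton_iff, not_or]
                    constructor
                    · rintro (rfl | rfl | ⟨h1, h2⟩)
                      · exact ⟨Ne.symm hx1x, Ne.symm hwz⟩
                      · exact ⟨Ne.symm hx1v, hv1w⟩
                      · exact ⟨h2.2, h1.2⟩
                    · rintro ⟨h1, h2⟩
                      by_cases e1 : t = x
                      · exact Or.inl e1
                      by_cases e2 : t = v1
                      · exact Or.inr (Or.inl e2)
                      · exact Or.inr (Or.inr ⟨⟨e1, h2⟩, e2, h1⟩)
                  have hm1X : ∀ tt, G.Inc m1 tt → tt ∈ ({x, v1} : Set V) := by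
                    intro tt htt
                    rcases hm1ends tt htt with rfl | rfl <;> simp
                  have hwalk := walk (G := G) (c := c) a b x w hab hza hxb
                    (Ne.symm hwz) hwa hwb ((Set.univ \ ({x, v1} : Set V)).ncard)
                    {x, v1} v1 x1 (N \ {m1}) (insert m1 (Qz \ {n1})) le_rfl
                    (fun f hf => hNmono hf.1) hm1m hcP
                    (by rintro f (rfl | ⟨hf, -⟩)
                        exacts [hNmono hm1N, hQmono hf]) hmQ' hcQ'
                    ⟨n1, hQmono hn1Q, hn1v, hn1x1⟩
                    hv1a hv1b hv1x hv1w hx1a hx1b hx1x hx1w (Ne.symm hx1v)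
                    (by simp) (by simp)
                    (by simp only [Set.mem_insert_iff, Set.mem_singleton_iff, not_or]
                        exact ⟨hx1x, hx1v⟩)
                    (by simp only [Set.mem_insert_iff, Set.mem_singleton_iff, not_or]
                        exact ⟨Ne.symm hza, Ne.symm hv1a⟩)
                    (by simp only [Set.mem_insert_iff, Set.mem_singleton_iff, not_or]
                        exact ⟨Ne.symm hxb, Ne.symm hv1b⟩)
                    (by simp only [Set.mem_insert_iff, Set.mem_singleton_iff, not_or]
                        exact ⟨hwz, Ne.symm hv1w⟩)
                    (by rintro y (rfl | rfl)
                        · exact ⟨m1, Set.mem_insert _ _, hm1X _ (Or.inl rfl),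
                            hm1X _ (Or.inr rfl), hm1x⟩
                        · exact ⟨m1, Set.mem_insert _ _, hm1X _ (Or.inl rfl),
                            hm1X _ (Or.inr rfl), hm1v⟩)
                    (by rintro y (rfl | rfl) hyz hys
                        · exact absurd rfl hyz
                        · exact absurd rfl hys)
                  rcases hwalk with ⟨N', hmo, hmm, hcc⟩ | ⟨N', hmo, hmm, hcc⟩ |
                    ⟨N', hmo, hmm, hcc⟩
                  · exact ih 1 (by omega) x a N' hza hmo hmm hcc hpath1
                  · exact ih k (by omega) x b N' hxb hmo hmm hcc hp'
                  · exact no_mono_pm h hmo hmm hcc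

/-- Two vertices missed by a mono near-perfect matching are not mono-connected. -/
lemma not_reach [Fintype V] (h : G.IsWState c) {a b : V} {N : Set E} (hab : a ≠ b)
    (hNmono : N ⊆ G.MonoEdges c) (hNm : G.IsMatching N)
    (hNc : CoversExactly G N (Set.univ \ {a, b})) :
    ¬ G.ReachOn (G.MonoEdges c) Set.univ a b := by
  intro hr
  obtain ⟨n, hp⟩ := reach_pathN hr
  exact main_lemma h n a b N hab hNmono hNm hNc hp

end WProof
namespace WProof

open Multigraph

variable {V E : Type} {G : Multigraph V E} {c : E → V → Bool}

lemma fc_cls [Fintype V] (h : G.IsWState c) (t0 : V) :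
    G.FactorCriticalOn (G.MonoEdges c) (cls G c t0) := by
  intro v hv
  obtain ⟨pv, Nv, hpvv, hmono, hm, hc⟩ := near_matching h v
  have hnR : ¬ G.ReachOn (G.MonoEdges c) Set.univ v pv :=
    not_reach h (Ne.symm hpvv) hmono hm hc
  have hpvX : pv ∉ cls G c t0 := fun hk => hnR (reach_trans hv.2 (reach_symm hk.2))
  refine ⟨{e ∈ Nv | G.fst e ∈ cls G c t0}, fun f hf => hmono hf.1, ?_, ?_⟩
  · rintro f ⟨hfNv, hffst⟩
    have h1 : G.fst f ∈ Set.univ \ ({v, pv} : Set V) := covers_mem hc hfNv (Or.inl rfl)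
    have h2 : G.snd f ∈ Set.univ \ ({v, pv} : Set V) := covers_mem hc hfNv (Or.inr rfl)
    have h12 := h1.2
    have h22 := h2.2
    simp only [Set.mem_insert_iff, Set.mem_singleton_iff, not_or] at h12 h22
    exact ⟨⟨hffst, h12.1⟩,
      ⟨cls_closed (hmono hfNv) (Or.inl rfl) (Or.inr rfl) hffst, h22.1⟩⟩
  · rintro y ⟨hyK, hyv⟩
    simp only [Set.mem_singleton_iff] at hyv
    have hy2 : y ∈ Set.univ \ ({v, pv} : Set V) := by
      refine ⟨trivial, ?_⟩
      simp only [Set.mem_insert_iff, Set.mem_singleton_iff, not_or]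
      exact ⟨hyv, fun hh => hpvX (hh ▸ hyK)⟩
    obtain ⟨f, hfNv, hfy⟩ := (hc y).mpr hy2
    have hffst : G.fst f ∈ cls G c t0 := cls_closed (hmono hfNv) hfy (Or.inl rfl) hyK
    exact ⟨f, ⟨⟨hfNv, hffst⟩, hfy⟩,
      fun g hg => matching_eq_of_inc hm hg.1.1 hfNv hg.2 hfy⟩

end WProof

/-- In a W-state graph, the monochromatic subgraph `G_m` is the
disjoint union of exactly two factor-critical connected components. -/
theorem stmt8 {V E : Type} [Fintype V] [Fintype E] (G : Multigraph V E)
    (c : E → V → Bool) (h : G.IsWState c) :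
    ∃ X X' : Set V, Disjoint X X' ∧ X ∪ X' = Set.univ ∧
      G.IsCompOn (G.MonoEdges c) Set.univ X ∧
      G.IsCompOn (G.MonoEdges c) Set.univ X' ∧
      G.FactorCriticalOn (G.MonoEdges c) X ∧
      G.FactorCriticalOn (G.MonoEdges c) X' := by
  classical
  rcases isEmpty_or_nonempty V with hemp | hne
  · exfalso
    obtain ⟨-, hcond, -, -⟩ := h
    have hpm : G.IsPerfectMatching (∅ : Set E) :=
      ⟨fun e he => absurd he (Set.notMem_empty e), fun v _ => (IsEmpty.false v).elim⟩
    obtain ⟨e, -, -⟩ := hcond ∅ hpm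
    exact (IsEmpty.false (G.fst e)).elim
  · obtain ⟨u0⟩ := hne
    obtain ⟨v0, N0, hv0u0, hN0mono, hN0m, hN0c⟩ := WProof.near_matching h u0
    have hnotR : ¬ G.ReachOn (G.MonoEdges c) Set.univ u0 v0 :=
      WProof.not_reach h (Ne.symm hv0u0) hN0mono hN0m hN0c
    refine ⟨WProof.cls G c u0, WProof.cls G c v0, ?_, ?_,
      ⟨u0, trivial, rfl⟩, ⟨v0, trivial, rfl⟩, WProof.fc_cls h u0, WProof.fc_cls h v0⟩
    · rw [Set.disjoint_left]
      intro t ht ht'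
      exact hnotR (WProof.reach_trans (WProof.reach_symm ht.2) ht'.2)
    · ext t
      simp only [Set.mem_union, Set.mem_univ, iff_true]
      by_contra hcon
      push_neg at hcon
      obtain ⟨ht1, ht2⟩ := hcon
      have hR1 : ¬ G.ReachOn (G.MonoEdges c) Set.univ t u0 := fun hr => ht1 ⟨trivial, hr⟩
      have hR2 : ¬ G.ReachOn (G.MonoEdges c) Set.univ t v0 := fun hr => ht2 ⟨trivial, hr⟩
      have htK : t ∈ WProof.cls G c t := WProof.cls_self t
      have hu0K : u0 ∉ WProof.cls G c t := fun hk => hR1 (WProof.reach_symm hk.2)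
      have hv0K : v0 ∉ WProof.cls G c t := fun hk => hR2 (WProof.reach_symm hk.2)
      -- first parity fact : K has even size
      have hcov1 : WProof.CoversExactly G {e ∈ N0 | G.fst e ∈ WProof.cls G c t}
          (WProof.cls G c t) := by
        refine WProof.covers_congr (WProof.restrict_covers hN0mono hN0m hN0c) ?_
        ext q
        simp only [Set.mem_diff, Set.mem_insert_iff, Set.mem_singleton_iff]
        constructor
        · exact fun hq => hq.1
        · intro hq
          refine ⟨hq, ?_⟩
          rintro (rfl | rfl)
          · exact hu0K hq
          · exact hv0K hq
      have heven1 : Even (WProof.cls G c t).ncard :=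
        WProof.even_of_covers _ _ _ rfl
          (WProof.matching_subset (Set.sep_subset _ _) hN0m) hcov1
      -- second parity fact : K minus t has even size
      obtain ⟨pt, Nt, hptt, hNtmono, hNtm, hNtc⟩ := WProof.near_matching h t
      have hnRt : ¬ G.ReachOn (G.MonoEdges c) Set.univ t pt :=
        WProof.not_reach h (Ne.symm hptt) hNtmono hNtm hNtc
      have hptK : pt ∉ WProof.cls G c t := fun hk => hnRt (WProof.reach_symm hk.2)
      have hcov2 : WProof.CoversExactly G {e ∈ Nt | G.fst e ∈ WProof.cls G c t}
          (WProof.cls G c t \ {t}) := by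
        refine WProof.covers_congr (WProof.restrict_covers hNtmono hNtm hNtc) ?_
        ext q
        simp only [Set.mem_diff, Set.mem_insert_iff, Set.mem_singleton_iff, not_or]
        constructor
        · exact fun hq => ⟨hq.1, hq.2.1⟩
        · rintro ⟨hq1, hq2⟩
          exact ⟨hq1, hq2, fun hh => hptK (hh ▸ hq1)⟩
      have heven2 : Even ((WProof.cls G c t) \ {t}).ncard :=
        WProof.even_of_covers _ _ _ rfl
          (WProof.matching_subset (Set.sep_subset _ _) hNtm) hcov2
      have hcard : ((WProof.cls G c t) \ {t}).ncard = (WProof.cls G c t).ncard - 1 :=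
        Set.ncard_diff_singleton_of_mem htK
      have hpos : 0 < (WProof.cls G c t).ncard :=
        (Set.ncard_pos (Set.toFinite _)).mpr ⟨t, htK⟩
      obtain ⟨r1, hr1⟩ := heven1
      obtain ⟨r2, hr2⟩ := heven2
      omega
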